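/- In a tree T, a vertex u belongs to the subtree core Core(T) if and only if for every neighbor v of u, F_{T−uv}(u) ≥ F_{T−uv}(v), where F_{T−uv}(x) counts the subtrees of the component of the forest T − uv containing x which contain x. -/

import Mathlib

open SimpleGraph Finset

/-- Eccentricity of a vertex: max distance to any vertex. -/
noncomputable def ecc {V : Type*} [Fintype V] (G : SimpleGraph V) (v : V) : ℕ :=
  Finset.univ.sup (fun u => G.dist v u)

/-- The center: vertices of minimum eccentricity. -/
noncomputable def center {V : Type*} [Fintype V] (G : SimpleGraph V) : Set V :=
  {v | ∀ u, ecc G v ≤ ecc G u}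

/-- Total distance of a vertex. -/
noncomputable def totalDist {V : Type*} [Fintype V] (G : SimpleGraph V) (v : V) : ℕ :=
  ∑ u, G.dist v u

/-- The centroid: vertices of minimum total distance. -/
noncomputable def centroid {V : Type*} [Fintype V] (G : SimpleGraph V) : Set V :=
  {v | ∀ u, totalDist G v ≤ totalDist G u}

/-- Number of subtrees (connected induced subgraphs on nonempty vertex sets) containing `v`. -/
noncomputable def subtreeCount {V : Type*} [Fintype V] (G : SimpleGraph V) (v : V) : ℕ :=
  Nat.card {A : Finset V // v ∈ A ∧ (G.induce (A : Set V)).Connected}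

/-- The subtree core: vertices maximizing the number of containing subtrees. -/
noncomputable def core {V : Type*} [Fintype V] (G : SimpleGraph V) : Set V :=
  {v | ∀ u, subtreeCount G u ≤ subtreeCount G v}

/-- Distance between two sets of vertices. -/
noncomputable def setDist {V : Type*} (G : SimpleGraph V) (S S' : Set V) : ℕ :=
  sInf {n | ∃ u ∈ S, ∃ v ∈ S', G.dist u v = n}



section SubtreeCoreAux

variable {V : Type*}

lemma reach_induce {G : SimpleGraph V} {A : Set V} {x y : V} (w : G.Walk x y)
    (hw : ∀ z ∈ w.support, z ∈ A) (hx : x ∈ A) (hy : y ∈ A) :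
    (G.induce A).Reachable ⟨x, hx⟩ ⟨y, hy⟩ := by
  induction w with
  | nil => exact Reachable.refl _
  | @cons a b c h p ih =>
      have hb : b ∈ A := hw b (by simp)
      have h1 : (G.induce A).Adj ⟨a, hx⟩ ⟨b, hb⟩ := by simpa using h
      exact h1.reachable.trans (ih (fun z hz => hw z (by simp [hz])) hb hy)

lemma conn_iff (G : SimpleGraph V) (A : Finset V) :
    (G.induce (A : Set V)).Connected ↔
      A.Nonempty ∧ ∀ x ∈ A, ∀ y ∈ A, ∃ w : G.Walk x y, ∀ z ∈ w.support, z ∈ A := by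
  constructor
  · intro h
    refine ⟨?_, ?_⟩
    · obtain ⟨⟨x, hx⟩⟩ := h.nonempty
      exact ⟨x, by simpa using hx⟩
    · intro x hx y hy
      obtain ⟨p⟩ := h.preconnected ⟨x, by simpa using hx⟩ ⟨y, by simpa using hy⟩
      refine ⟨p.map (Embedding.induce _).toHom, ?_⟩
      intro z hz
      replace hz : z ∈ p.support.map (Embedding.induce (G := G) (A : Set V)).toHom := by
        rw [← Walk.support_map]; exact hz
      obtain ⟨⟨z', hz'⟩, _, rfl⟩ := List.mem_map.mp hz
      simpa using hz'
  · rintro ⟨⟨a, ha⟩, h⟩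
    rw [connected_iff_exists_forall_reachable]
    refine ⟨⟨a, by simpa using ha⟩, ?_⟩
    rintro ⟨x, hx⟩
    obtain ⟨w, hw⟩ := h a ha x (by simpa using hx)
    exact reach_induce w (fun z hz => by simpa using hw z hz) _ _

lemma conn_mono {G1 G2 : SimpleGraph V} (h : G1 ≤ G2) {A : Finset V}
    (hc : (G1.induce (A : Set V)).Connected) : (G2.induce (A : Set V)).Connected := by
  rw [conn_iff] at hc ⊢
  refine ⟨hc.1, fun x hx y hy => ?_⟩
  obtain ⟨w, hw⟩ := hc.2 x hx y hy
  refine ⟨w.mapLe h, fun z hz => hw z ?_⟩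
  rw [Walk.mapLe, Walk.support_map] at hz
  obtain ⟨a, ha, rfl⟩ := List.mem_map.mp hz
  exact ha

/-- deleting an edge at `p` keeps `A` connected when `p ∉ A`. -/

lemma conn_delete_of_not_mem {G : SimpleGraph V} {A : Finset V} {p q : V}
    (hc : (G.induce (A : Set V)).Connected) (hp : p ∉ A) :
    ((G.deleteEdges {s(p,q)}).induce (A : Set V)).Connected := by
  rw [conn_iff] at hc ⊢
  refine ⟨hc.1, fun x hx y hy => ?_⟩
  obtain ⟨w, hw⟩ := hc.2 x hx y hy
  refine ⟨w.toDeleteEdges _ (fun e he hmem => ?_), by simpa using hw⟩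
  rw [Set.mem_singleton_iff] at hmem
  subst hmem
  exact hp (hw p (w.fst_mem_support_of_mem_edges he))

/-- dichotomy: after deleting a bridge, everything reachable from u reaches u or v. -/

lemma reach_dichotomy {G : SimpleGraph V} {u v : V} :
    ∀ {s x : V}, G.Walk s x →
      ((G.deleteEdges {s(u,v)}).Reachable u s ∨ (G.deleteEdges {s(u,v)}).Reachable v s) →
      ((G.deleteEdges {s(u,v)}).Reachable u x ∨ (G.deleteEdges {s(u,v)}).Reachable v x) := by
  intro s x w
  induction w with
  | nil => exact id
  | @cons a b c h p ih =>
      intro hs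
      by_cases he : s(a,b) = s(u,v)
      · rw [Sym2.eq_iff] at he
        rcases he with ⟨rfl, rfl⟩ | ⟨rfl, rfl⟩
        · exact ih (Or.inr (Reachable.refl _))
        · exact ih (Or.inl (Reachable.refl _))
      · have hab : (G.deleteEdges {s(u,v)}).Adj a b := by simp [h, he]
        exact ih (hs.imp (fun h' => h'.trans hab.reachable) (fun h' => h'.trans hab.reachable))

/-- walks to `u` inside `A` can avoid the deleted bridge if start is on u's side. -/

lemma walk_to_u {G : SimpleGraph V} {u v : V} {A : Finset V}
    (hnr : ¬ (G.deleteEdges {s(u,v)}).Reachable u v) :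
    ∀ {x : V} (w : G.Walk x u), (∀ z ∈ w.support, z ∈ A) →
      (G.deleteEdges {s(u,v)}).Reachable u x →
      ∃ w' : (G.deleteEdges {s(u,v)}).Walk x u, ∀ z ∈ w'.support, z ∈ A
  | x, Walk.nil, hw, _ => ⟨Walk.nil, hw⟩
  | x, Walk.cons (v := b) h p, hw, hr => by
      by_cases he : s(x,b) = s(u,v)
      · rw [Sym2.eq_iff] at he
        rcases he with ⟨rfl, rfl⟩ | ⟨rfl, rfl⟩
        · refine ⟨Walk.nil, fun z hz => ?_⟩
          have : z = x := by simpa using hz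
          exact this ▸ hw x (by simp)
        · exact absurd hr hnr
      · have hab : (G.deleteEdges {s(u,v)}).Adj x b := by simp [h, he]
        obtain ⟨w', hw'⟩ := walk_to_u hnr p (fun z hz => hw z (by simp [hz]))
          (hr.trans hab.reachable)
        refine ⟨Walk.cons hab w', fun z hz => ?_⟩
        have : z = x ∨ z ∈ w'.support := by simpa using hz
        rcases this with rfl | h1
        · exact hw z (by simp)
        · exact hw' z h1

lemma reach_of_conn {G : SimpleGraph V} {A : Finset V} (hc : (G.induce (A : Set V)).Connected)
    {x y : V} (hx : x ∈ A) (hy : y ∈ A) : G.Reachable x y := by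
  rw [conn_iff] at hc
  obtain ⟨w, -⟩ := hc.2 x hx y hy
  exact ⟨w⟩

open Classical in
lemma subtreeCount_eq_card [Fintype V] (G : SimpleGraph V) (x : V) :
    subtreeCount G x = (univ.filter
      (fun A : Finset V => x ∈ A ∧ (G.induce (A : Set V)).Connected)).card := by
  rw [subtreeCount, Nat.card_eq_fintype_card, Fintype.card_subtype]

lemma one_le_subtreeCount [Fintype V] (G : SimpleGraph V) (x : V) : 1 ≤ subtreeCount G x := by
  have hconn : (G.induce (({x} : Finset V) : Set V)).Connected := by
    rw [conn_iff]
    refine ⟨⟨x, by simp⟩, fun a ha b hb => ?_⟩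
    simp only [Finset.mem_singleton] at ha hb
    subst ha; subst hb
    exact ⟨Walk.nil, fun z hz => by simpa using hz⟩
  have : Nonempty {A : Finset V // x ∈ A ∧ (G.induce (A : Set V)).Connected} :=
    ⟨⟨{x}, by simp, hconn⟩⟩
  have : 0 < subtreeCount G x := Nat.card_pos
  omega

lemma conn_piece {G : SimpleGraph V} {u v : V}
    (hnr : ¬ (G.deleteEdges {s(u,v)}).Reachable u v) {A B : Finset V}
    (hc : (G.induce (A : Set V)).Connected) (hu : u ∈ A)
    (hB : ∀ x, x ∈ B ↔ x ∈ A ∧ (G.deleteEdges {s(u,v)}).Reachable u x) :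
    ((G.deleteEdges {s(u,v)}).induce (B : Set V)).Connected := by
  classical
  set G' := G.deleteEdges {s(u,v)} with hG'def
  rw [conn_iff] at hc ⊢
  refine ⟨⟨u, (hB u).2 ⟨hu, Reachable.refl u⟩⟩, fun x hx y hy => ?_⟩
  obtain ⟨hxA, hxR⟩ := (hB x).1 hx
  obtain ⟨hyA, hyR⟩ := (hB y).1 hy
  obtain ⟨wx, hwx⟩ := hc.2 x hxA u hu
  obtain ⟨wy, hwy⟩ := hc.2 y hyA u hu
  obtain ⟨wx', hwx'⟩ := walk_to_u hnr wx hwx hxR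
  obtain ⟨wy', hwy'⟩ := walk_to_u hnr wy hwy hyR
  refine ⟨wx'.append wy'.reverse, fun z hz => ?_⟩
  rw [Walk.mem_support_append_iff] at hz
  rcases hz with hz | hz
  · refine (hB z).2 ⟨hwx' z hz, hxR.trans ⟨wx'.takeUntil z hz⟩⟩
  · rw [Walk.support_reverse, List.mem_reverse] at hz
    exact (hB z).2 ⟨hwy' z hz, hyR.trans ⟨wy'.takeUntil z hz⟩⟩

lemma split_count [Fintype V] {G : SimpleGraph V} {u v : V} (h : G.Adj u v)
    (hnr : ¬ (G.deleteEdges {s(u,v)}).Reachable u v) :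
    subtreeCount G u =
      subtreeCount (G.deleteEdges {s(u,v)}) u *
        (subtreeCount (G.deleteEdges {s(u,v)}) v + 1) := by
  classical
  set G' := G.deleteEdges {s(u,v)} with hG'def
  have hG'le : G' ≤ G := deleteEdges_le _
  have hdisj : ∀ x, G'.Reachable u x → G'.Reachable v x → False := fun x h1 h2 =>
    hnr (h1.trans h2.symm)
  rw [subtreeCount_eq_card, subtreeCount_eq_card, subtreeCount_eq_card]
  set S := univ.filter (fun A : Finset V => u ∈ A ∧ (G.induce (A : Set V)).Connected) with hS
  set Su := univ.filter (fun A : Finset V => u ∈ A ∧ (G'.induce (A : Set V)).Connected) with hSu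
  set Sv := univ.filter (fun A : Finset V => v ∈ A ∧ (G'.induce (A : Set V)).Connected) with hSv
  have hsplit : (S.filter (fun A => v ∈ A)).card + (S.filter (fun A => ¬ v ∈ A)).card = S.card :=
    card_filter_add_card_filter_not _
  -- the v-free part is Su
  have h1 : S.filter (fun A => ¬ v ∈ A) = Su := by
    ext A
    simp only [hS, hSu, mem_filter, mem_univ, true_and, and_assoc]
    constructor
    · rintro ⟨hu, hc, hv⟩
      have := conn_delete_of_not_mem (q := u) hc hv
      rw [Sym2.eq_swap] at this
      exact ⟨hu, this⟩
    · rintro ⟨hu, hc⟩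
      refine ⟨hu, conn_mono hG'le hc, fun hv => hnr (reach_of_conn hc hu hv)⟩
  -- the part containing v is in bijection with Su ×ˢ Sv
  have h2 : (S.filter (fun A => v ∈ A)).card = (Su ×ˢ Sv).card := by
    refine card_bij' (fun A _ => (A.filter (fun x => G'.Reachable u x),
        A.filter (fun x => G'.Reachable v x))) (fun p _ => p.1 ∪ p.2) ?_ ?_ ?_ ?_
    · rintro A hA
      simp only [hS, mem_filter, mem_univ, true_and] at hA
      obtain ⟨⟨huA, hcA⟩, hvA⟩ := hA
      simp only [hSu, hSv, mem_product, mem_filter, mem_univ, true_and]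
      have hnr' : ¬ (G.deleteEdges {s(v,u)}).Reachable v u := by
        rw [Sym2.eq_swap]; exact fun hr => hnr hr.symm
      have heq : G.deleteEdges {s(v,u)} = G' := by rw [Sym2.eq_swap]
      refine ⟨⟨⟨huA, Reachable.refl u⟩, ?_⟩, ⟨hvA, Reachable.refl v⟩, ?_⟩
      · exact conn_piece hnr hcA huA (fun x => by simp [mem_filter, hG'def])
      · have hv2 := conn_piece (u := v) (v := u)
          (by rw [heq]; exact fun hr => hnr hr.symm) hcA hvA
          (B := A.filter (fun x => G'.Reachable v x))
          (fun x => by rw [heq]; simp [mem_filter])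
        rw [heq] at hv2
        exact hv2
    · rintro ⟨B, C⟩ hp
      simp only [hSu, hSv, mem_product, mem_filter, mem_univ, true_and] at hp
      obtain ⟨⟨huB, hcB⟩, hvC, hcC⟩ := hp
      simp only [hS, mem_filter, mem_univ, true_and]
      have hconn : (G.induce ((B : Set V) ∪ (C : Set V))).Connected :=
        connected_induce_union (conn_mono hG'le hcB).preconnected (conn_mono hG'le hcC).preconnected huB hvC h
      rw [← Finset.coe_union] at hconn
      exact ⟨⟨mem_union_left _ huB, hconn⟩, mem_union_right _ hvC⟩
    · rintro A hA
      simp only [hS, mem_filter, mem_univ, true_and] at hA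
      obtain ⟨⟨huA, hcA⟩, hvA⟩ := hA
      -- union of the two filters is A
      ext x
      simp only [mem_union, mem_filter]
      constructor
      · rintro (⟨hx, -⟩ | ⟨hx, -⟩) <;> exact hx
      · intro hx
        obtain ⟨w⟩ := reach_of_conn hcA huA hx
        rcases reach_dichotomy w (Or.inl (Reachable.refl u)) with hr | hr
        · exact Or.inl ⟨hx, hr⟩
        · exact Or.inr ⟨hx, hr⟩
    · rintro ⟨B, C⟩ hp
      simp only [hSu, hSv, mem_product, mem_filter, mem_univ, true_and] at hp
      obtain ⟨⟨huB, hcB⟩, hvC, hcC⟩ := hp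
      have hBs : ∀ x ∈ B, G'.Reachable u x := fun x hx => reach_of_conn hcB huB hx
      have hCs : ∀ x ∈ C, G'.Reachable v x := fun x hx => reach_of_conn hcC hvC hx
      have e1 : (B ∪ C).filter (fun x => G'.Reachable u x) = B := by
        ext x
        simp only [mem_filter, mem_union]
        constructor
        · rintro ⟨hx | hx, hr⟩
          · exact hx
          · exact absurd (hCs x hx) (fun h2 => hdisj x hr h2)
        · intro hx; exact ⟨Or.inl hx, hBs x hx⟩
      have e2 : (B ∪ C).filter (fun x => G'.Reachable v x) = C := by
        ext x
        simp only [mem_filter, mem_union]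
        constructor
        · rintro ⟨hx | hx, hr⟩
          · exact absurd (hBs x hx) (fun h2 => hdisj x h2 hr)
          · exact hx
        · intro hx; exact ⟨Or.inr hx, hCs x hx⟩
      simp [e1, e2]
  have h3 : (Su ×ˢ Sv).card = Su.card * Sv.card := card_product _ _
  rw [← hsplit, h1, h2, h3]
  rw [hSu, hSv]
  congr

lemma tree_bridge {G : SimpleGraph V} (hT : G.IsTree) {a b : V} (hab : G.Adj a b) :
    ¬ (G.deleteEdges {s(a,b)}).Reachable a b :=
  ((isAcyclic_iff_forall_adj_isBridge.mp hT.IsAcyclic) hab)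

lemma count_delete_eq [Fintype V] {G : SimpleGraph V} {x p q : V}
    (hnr : ¬ G.Reachable x p) :
    subtreeCount (G.deleteEdges {s(p,q)}) x = subtreeCount G x := by
  classical
  rw [subtreeCount_eq_card, subtreeCount_eq_card]
  congr 1
  ext A
  simp only [mem_filter, mem_univ, true_and]
  constructor
  · rintro ⟨hx, hc⟩
    exact ⟨hx, conn_mono (deleteEdges_le _) hc⟩
  · rintro ⟨hx, hc⟩
    have hp : p ∉ A := fun hpA => hnr (reach_of_conn hc hx hpA)
    exact ⟨hx, conn_delete_of_not_mem hc hp⟩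

lemma count_le_count [Fintype V] {G : SimpleGraph V} {a b : V} (hab : G.Adj a b)
    (hbr : ¬ (G.deleteEdges {s(a,b)}).Reachable a b)
    (hle : subtreeCount (G.deleteEdges {s(a,b)}) b ≤ subtreeCount (G.deleteEdges {s(a,b)}) a) :
    subtreeCount G b ≤ subtreeCount G a := by
  have k1 := split_count hab hbr
  have k2 := split_count (u := b) (v := a) hab.symm
    (by rw [Sym2.eq_swap]; exact fun hr => hbr hr.symm)
  rw [Sym2.eq_swap (a := b) (b := a)] at k2
  nlinarith [k1, k2, hle]

lemma exists_parent {G : SimpleGraph V} (hc : G.Connected) {u x : V} (hne : x ≠ u) :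
    ∃ t, G.Adj t x ∧ G.dist u x = G.dist u t + 1 := by
  obtain ⟨p, hp⟩ := (hc.preconnected u x).exists_walk_length_eq_dist
  have hd0 : G.dist u x ≠ 0 :=
    Nat.pos_iff_ne_zero.mp ((hc.preconnected u x).pos_dist_of_ne (Ne.symm hne))
  have hw : p.reverse.length = G.dist u x := by rw [Walk.length_reverse, hp]
  rcases hq : p.reverse with _ | ⟨ht, q⟩
  · exfalso
    apply hd0
    rw [← hw, hq]
    rfl
  · rename_i t
    refine ⟨t, ht.symm, ?_⟩
    have hlen : q.length + 1 = G.dist u x := by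
      rw [← hw, hq, Walk.length_cons]
    have h1 : G.dist u t ≤ q.length := by
      have := dist_le q.reverse
      rwa [Walk.length_reverse] at this
    have h2 : G.dist u x ≤ G.dist u t + 1 := by
      have h3 := hc.dist_triangle (u := u) (v := t) (w := x)
      have h4 : G.dist t x ≤ 1 := dist_le (Walk.cons ht.symm Walk.nil)
      omega
    omega

lemma prop_step [Fintype V] {G : SimpleGraph V} (hT : G.IsTree) {t v w : V}
    (htv : G.Adj t v) (hvw : G.Adj v w) (hwt : w ≠ t)
    (hle : subtreeCount (G.deleteEdges {s(t,v)}) v ≤ subtreeCount (G.deleteEdges {s(t,v)}) t) :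
    subtreeCount (G.deleteEdges {s(v,w)}) w ≤ subtreeCount (G.deleteEdges {s(v,w)}) v := by
  classical
  have hb1 : ¬ (G.deleteEdges {s(t,v)}).Reachable t v := tree_bridge hT htv
  have hb2 : ¬ (G.deleteEdges {s(v,w)}).Reachable v w := tree_bridge hT hvw
  have hne : s(t,v) ≠ s(v,w) := by
    intro he
    rcases Sym2.eq_iff.mp he with ⟨rfl, rfl⟩ | ⟨rfl, -⟩
    · exact htv.ne rfl
    · exact hwt rfl
  set D := G.deleteEdges {s(t,v), s(v,w)} with hDdef
  have hD1 : (G.deleteEdges {s(t,v)}).deleteEdges {s(v,w)} = D := by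
    rw [deleteEdges_deleteEdges, Set.singleton_union]
  have hD2 : (G.deleteEdges {s(v,w)}).deleteEdges {s(t,v)} = D := by
    rw [deleteEdges_deleteEdges, Set.singleton_union, Set.pair_comm]
  have hDle1 : D ≤ G.deleteEdges {s(t,v)} := by
    rw [← hD1]; exact deleteEdges_le _
  have hDle2 : D ≤ G.deleteEdges {s(v,w)} := by
    rw [← hD2]; exact deleteEdges_le _
  have h1 : (G.deleteEdges {s(t,v)}).Adj v w := by
    simp only [deleteEdges_adj, Set.mem_singleton_iff]
    exact ⟨hvw, fun he => hne he.symm⟩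
  have h2 : (G.deleteEdges {s(v,w)}).Adj v t := by
    simp only [deleteEdges_adj, Set.mem_singleton_iff]
    refine ⟨htv.symm, fun he => hne ?_⟩
    rw [Sym2.eq_swap (a := v) (b := t)] at he
    exact he
  have ra : ¬ D.Reachable v w := fun hr => hb2 (hr.mono hDle2)
  have rb : ¬ D.Reachable v t := fun hr => hb1 (hr.mono hDle1).symm
  set a := subtreeCount D t with ha
  set m := subtreeCount D v with hm
  set b := subtreeCount D w with hb
  -- split on G - e1 along edge vw
  have s1 : subtreeCount (G.deleteEdges {s(t,v)}) v = m * (b + 1) := by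
    have := split_count (G := G.deleteEdges {s(t,v)}) h1 (by rw [hD1]; exact ra)
    rwa [hD1] at this
  have s2 : subtreeCount (G.deleteEdges {s(t,v)}) t = a := by
    have := count_delete_eq (G := G.deleteEdges {s(t,v)}) (x := t) (p := v) (q := w) hb1
    rw [hD1] at this
    exact this.symm
  have hswap : s(v,t) = s(t,v) := Sym2.eq_swap
  have s3 : subtreeCount (G.deleteEdges {s(v,w)}) v = m * (a + 1) := by
    have := split_count (G := G.deleteEdges {s(v,w)}) h2 (by
      rw [hswap, hD2]; exact rb)
    rwa [hswap, hD2] at this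
  have s4 : subtreeCount (G.deleteEdges {s(v,w)}) w = b := by
    have := count_delete_eq (G := G.deleteEdges {s(v,w)}) (x := w) (p := v) (q := t)
      (fun hr => hb2 hr.symm)
    rw [hswap, hD2] at this
    exact this.symm
  have hm1 : 1 ≤ m := one_le_subtreeCount _ _
  rw [s1, s2] at hle
  rw [s3, s4]
  nlinarith [hle, hm1]

lemma step_all [Fintype V] {G : SimpleGraph V} (hT : G.IsTree) {u : V}
    (hu : ∀ v, G.Adj u v → subtreeCount (G.deleteEdges {s(u,v)}) v ≤
      subtreeCount (G.deleteEdges {s(u,v)}) u) :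
    ∀ n v w, G.dist u v = n → G.Adj v w → G.dist u w = n + 1 →
      subtreeCount (G.deleteEdges {s(v,w)}) w ≤ subtreeCount (G.deleteEdges {s(v,w)}) v := by
  intro n
  induction n using Nat.strong_induction_on with
  | _ n ih =>
    intro v w hdv hvw hdw
    rcases Nat.eq_zero_or_pos n with rfl | hn
    · have hv : u = v := by
        have := (hT.isConnected.preconnected u v).dist_eq_zero_iff.mp hdv
        exact this
      subst hv
      exact hu w hvw
    · have hvu : v ≠ u := by
        rintro rfl
        rw [dist_self] at hdv
        omega
      obtain ⟨t, htv, hdt⟩ := exists_parent hT.isConnected hvu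
      have h1 := ih (n - 1) (by omega) t v (by omega) htv (by omega)
      refine prop_step hT htv hvw (fun hwt => ?_) h1
      subst hwt
      omega

end SubtreeCoreAux

/-- subtree core characterization. -/
theorem mem_core_iff {V : Type*} [Fintype V] (G : SimpleGraph V)
    (hT : G.IsTree) (u : V) :
    u ∈ core G ↔ ∀ v, G.Adj u v →
      subtreeCount (G.deleteEdges {s(u,v)}) v ≤
        subtreeCount (G.deleteEdges {s(u,v)}) u := by
  classical
  constructor
  · intro hcore v hadj
    have hbr := tree_bridge hT hadj
    have k1 := split_count hadj hbr
    have k2 := split_count (u := v) (v := u) hadj.symm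
      (by rw [Sym2.eq_swap]; exact fun hr => hbr hr.symm)
    rw [Sym2.eq_swap (a := v) (b := u)] at k2
    have hF : subtreeCount G v ≤ subtreeCount G u := hcore v
    nlinarith [hF, k1, k2]
  · intro hstep x
    suffices H : ∀ n y, G.dist u y = n → subtreeCount G y ≤ subtreeCount G u from
      H _ x rfl
    intro n
    induction n using Nat.strong_induction_on with
    | _ n ih =>
      intro y hdy
      rcases eq_or_ne y u with rfl | hne
      · exact le_refl _
      · obtain ⟨t, hty, hdt⟩ := exists_parent hT.isConnected hne
        have hn0 : n ≠ 0 := by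
          rintro rfl
          exact hne ((hT.isConnected.preconnected u y).dist_eq_zero_iff.mp hdy).symm
        have h1 := step_all hT hstep (G.dist u t) t y rfl hty (by omega)
        have h2 : subtreeCount G y ≤ subtreeCount G t :=
          count_le_count hty (tree_bridge hT hty) h1
        exact h2.trans (ih (n - 1) (by omega) t (by omega))
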